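/- Let q be an odd prime power, s an odd divisor of q+1, t an even divisor of q-1 with t ≥ 2, h ≤ s-1 and r ≤ t positive integers, l = (q²-1)/s, m = (q²-1)/t, and g a primitive element of F_{q²}. Set A = { g^α δ^i : 0 ≤ α ≤ h-1, 0 ≤ i ≤ l-1 } and B = { g^β θ^j : 0 ≤ β ≤ r-1, 0 ≤ j ≤ m-1 } where δ = g^s, θ = g^t. Then |A| = lh, |B| = mr, and |A ∩ B| = hr·(q²-1)/(st). -/

import Mathlib

open Finset

lemma countAux (N d : ℕ) (hd : d ∣ N) (hd0 : 0 < d) (P : ℕ → Prop) [DecidablePred P] :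
    ((Finset.range N).filter (fun n => P (n % d))).card
      = (N / d) * ((Finset.range d).filter P).card := by
  rw [← Finset.card_range (N / d), ← Finset.card_product]
  apply Finset.card_nbij' (i := fun n => (n / d, n % d)) (j := fun p => p.2 + d * p.1)
  · intro n hn
    simp only [Finset.mem_coe, Finset.mem_filter, Finset.mem_range] at hn
    simp only [Finset.mem_coe, Finset.mem_product, Finset.mem_range, Finset.mem_filter]
    refine ⟨Nat.div_lt_div_of_lt_of_dvd hd hn.1, Nat.mod_lt _ hd0, hn.2⟩
  · intro p hp
    simp only [Finset.mem_coe, Finset.mem_product, Finset.mem_range, Finset.mem_filter] at hp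
    simp only [Finset.mem_coe, Finset.mem_filter, Finset.mem_range]
    constructor
    · calc p.2 + d * p.1 < d + d * p.1 := by omega
        _ = d * (p.1 + 1) := by ring
        _ ≤ d * (N / d) := by
          exact Nat.mul_le_mul_left d hp.1
        _ = N := Nat.mul_div_cancel' hd
    · rw [Nat.add_mul_mod_self_left, Nat.mod_eq_of_lt hp.2.1]
      exact hp.2.2
  · intro n hn
    simp only
    exact (Nat.mod_add_div n d)
  · intro p hp
    simp only [Finset.mem_coe, Finset.mem_product, Finset.mem_range, Finset.mem_filter] at hp
    have h2 : p.2 < d := hp.2.1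
    have : (p.2 + d * p.1) / d = p.1 := by
      rw [Nat.add_mul_div_left _ _ hd0, Nat.div_eq_of_lt h2, Nat.zero_add]
    have hm : (p.2 + d * p.1) % d = p.2 := by
      rw [Nat.add_mul_mod_self_left, Nat.mod_eq_of_lt h2]
    simp [this, hm]

lemma countCRT (s t h r : ℕ) (cop : Nat.Coprime s t) (hs0 : 0 < s) (ht0 : 0 < t)
    (hhs : h ≤ s) (hrt : r ≤ t) :
    ((Finset.range (s * t)).filter (fun k => k % s < h ∧ k % t < r)).card = h * r := by
  have key : ((Finset.range (s * t)).filter (fun k => k % s < h ∧ k % t < r)).card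
      = (Finset.range h ×ˢ Finset.range r).card := by
    apply Finset.card_nbij (i := fun k => (k % s, k % t))
    · intro k hk
      simp only [Finset.mem_coe, Finset.mem_filter, Finset.mem_range] at hk
      simp only [Finset.mem_coe, Finset.mem_product, Finset.mem_range]
      exact hk.2
    · intro k1 hk1 k2 hk2 heq
      simp only [Finset.coe_filter, Finset.mem_range, Set.mem_setOf_eq] at hk1 hk2
      have h1 : k1 ≡ k2 [MOD s] := by
        unfold Nat.ModEq; exact congrArg Prod.fst heq
      have h2 : k1 ≡ k2 [MOD t] := by
        unfold Nat.ModEq; exact congrArg Prod.snd heq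
      have h3 : k1 ≡ k2 [MOD s * t] :=
        (Nat.modEq_and_modEq_iff_modEq_mul cop).mp ⟨h1, h2⟩
      unfold Nat.ModEq at h3
      rwa [Nat.mod_eq_of_lt hk1.1, Nat.mod_eq_of_lt hk2.1] at h3
    · intro p hp
      simp only [Finset.coe_product, Finset.coe_range, Set.mem_prod, Set.mem_Iio] at hp
      obtain ⟨k0, hk0a, hk0b⟩ := Nat.chineseRemainder cop p.1 p.2
      refine ⟨k0 % (s * t), ?_, ?_⟩
      · simp only [Finset.coe_filter, Finset.mem_range, Set.mem_setOf_eq]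
        have hst : 0 < s * t := Nat.mul_pos hs0 ht0
        have e1 : k0 % (s * t) % s = k0 % s :=
          Nat.mod_mod_of_dvd _ ⟨t, rfl⟩
        have e2 : k0 % (s * t) % t = k0 % t :=
          Nat.mod_mod_of_dvd _ ⟨s, Nat.mul_comm s t⟩
        have ha : k0 % s = p.1 := by
          rw [hk0a, Nat.mod_eq_of_lt (lt_of_lt_of_le hp.1 hhs)]
        have hb : k0 % t = p.2 := by
          rw [hk0b, Nat.mod_eq_of_lt (lt_of_lt_of_le hp.2 hrt)]
        exact ⟨Nat.mod_lt _ hst, by rw [e1, ha]; exact hp.1, by rw [e2, hb]; exact hp.2⟩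
      · have e1 : k0 % (s * t) % s = k0 % s := Nat.mod_mod_of_dvd _ ⟨t, rfl⟩
        have e2 : k0 % (s * t) % t = k0 % t := Nat.mod_mod_of_dvd _ ⟨s, Nat.mul_comm s t⟩
        have ha : k0 % s = p.1 := by
          rw [hk0a, Nat.mod_eq_of_lt (lt_of_lt_of_le hp.1 hhs)]
        have hb : k0 % t = p.2 := by
          rw [hk0b, Nat.mod_eq_of_lt (lt_of_lt_of_le hp.2 hrt)]
        simp [e1, e2, ha, hb]
  rw [key, Finset.card_product, Finset.card_range, Finset.card_range]

theorem stmt_17 (q s t h r : ℕ) (hq : IsPrimePow q) (hqodd : Odd q)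
    (hsodd : Odd s) (hsdvd : s ∣ q + 1)
    (hteven : Even t) (ht2 : 2 ≤ t) (htdvd : t ∣ q - 1)
    (hh : 1 ≤ h) (hhs : h ≤ s - 1) (hr : 1 ≤ r) (hrt : r ≤ t)
    (F : Type*) [Field F] [Fintype F] (hF : Fintype.card F = q ^ 2)
    (g : F) (hg : orderOf g = q ^ 2 - 1) :
    let A : Set F := {x | ∃ α < h, ∃ i < (q ^ 2 - 1) / s, x = g ^ α * (g ^ s) ^ i}
    let B : Set F := {x | ∃ β < r, ∃ j < (q ^ 2 - 1) / t, x = g ^ β * (g ^ t) ^ j}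
    A.ncard = (q ^ 2 - 1) / s * h ∧ B.ncard = (q ^ 2 - 1) / t * r ∧
      (A ∩ B).ncard = h * r * ((q ^ 2 - 1) / (s * t)) := by
  intro A B
  classical
  set N := q ^ 2 - 1 with hN
  -- basic facts
  have hq3 : 3 ≤ q := by
    have h2 : 2 ≤ q := hq.two_le
    rcases Nat.lt_or_ge q 3 with hlt | hge
    · interval_cases q
      · exact absurd hqodd (by decide)
    · exact hge
  have hs0 : 0 < s := hsodd.pos
  have ht0 : 0 < t := by omega
  have hhs' : h < s := by omega
  have hNq : N = (q + 1) * (q - 1) := by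
    have h1 : (1:ℕ) ≤ q := by omega
    have := Nat.sq_sub_sq q 1
    simpa [hN] using this
  have hN0 : 0 < N := by
    rw [hNq]; exact Nat.mul_pos (by omega) (by omega)
  have cop : Nat.Coprime s t := by
    have hd1 : Nat.gcd s t ∣ q + 1 := dvd_trans (Nat.gcd_dvd_left s t) hsdvd
    have hd2 : Nat.gcd s t ∣ q - 1 := dvd_trans (Nat.gcd_dvd_right s t) htdvd
    have hd3 : Nat.gcd s t ∣ 2 := by
      have := Nat.dvd_sub hd1 hd2
      have h2 : q + 1 - (q - 1) = 2 := by omega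
      rwa [h2] at this
    have hds : Nat.gcd s t ∣ s := Nat.gcd_dvd_left s t
    have hodd : Odd (Nat.gcd s t) := hsodd.of_dvd_nat hds
    rcases (Nat.dvd_prime Nat.prime_two).mp hd3 with h1 | h2
    · exact h1
    · rw [h2] at hodd
      exact absurd hodd (by decide)
  have hsN : s ∣ N := by
    rw [hNq]; exact Dvd.dvd.mul_right hsdvd (q - 1)
  have htN : t ∣ N := by
    rw [hNq]; exact Dvd.dvd.mul_left htdvd (q + 1)
  have hstN : s * t ∣ N := by
    rw [hNq]; exact Nat.Coprime.mul_dvd_of_dvd_of_dvd cop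
      (Dvd.dvd.mul_right hsdvd (q - 1)) (Dvd.dvd.mul_left htdvd (q + 1))
  -- injectivity of powers below N
  have hinj : ∀ a b : ℕ, a < N → b < N → g ^ a = g ^ b → a = b := by
    intro a b ha hb hab
    exact pow_injOn_Iio_orderOf (by rwa [hg, Set.mem_Iio] : a ∈ _)
      (by rwa [hg, Set.mem_Iio] : b ∈ _) hab
  -- key set descriptions
  have descr : ∀ (d c : ℕ), d ∣ N → 0 < d → c ≤ d →
      {x : F | ∃ α < c, ∃ i < N / d, x = g ^ α * (g ^ d) ^ i}
        = ↑(((Finset.range N).filter (fun n => n % d < c)).image (fun n => g ^ n)) := by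
    intro d c hdN hd0 hcd
    ext x
    simp only [Set.mem_setOf_eq, Finset.coe_image, Set.mem_image, Finset.mem_coe,
      Finset.mem_filter, Finset.mem_range]
    constructor
    · rintro ⟨α, hα, i, hi, rfl⟩
      refine ⟨α + d * i, ⟨?_, ?_⟩, ?_⟩
      · calc α + d * i < d + d * i := by omega
          _ = d * (i + 1) := by ring
          _ ≤ d * (N / d) := Nat.mul_le_mul_left d hi
          _ = N := Nat.mul_div_cancel' hdN
      · rw [Nat.add_mul_mod_self_left, Nat.mod_eq_of_lt (lt_of_lt_of_le hα hcd)]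
        exact hα
      · rw [pow_add, pow_mul]
    · rintro ⟨n, ⟨hn, hnc⟩, rfl⟩
      refine ⟨n % d, hnc, n / d, ?_, ?_⟩
      · have : n < (N / d) * d := by
          rw [Nat.div_mul_cancel hdN]; exact hn
        exact Nat.div_lt_of_lt_mul (by rwa [Nat.mul_comm] at this)
      · rw [← pow_mul, ← pow_add, Nat.mod_add_div]
  -- injectivity of image gives cards
  have cardim : ∀ (S : Finset ℕ), (∀ n ∈ S, n < N) →
      (↑(S.image (fun n => g ^ n)) : Set F).ncard = S.card := by
    intro S hS
    rw [Set.ncard_coe_finset, Finset.card_image_of_injOn]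
    intro a ha b hb hab
    exact hinj a b (hS a ha) (hS b hb) hab
  have memN : ∀ (p : ℕ → Prop) [DecidablePred p],
      ∀ n ∈ (Finset.range N).filter p, n < N := by
    intro p _ n hn
    exact Finset.mem_range.mp (Finset.mem_filter.mp hn).1
  have hA : A = ↑(((Finset.range N).filter (fun n => n % s < h)).image (fun n => g ^ n)) :=
    descr s h hsN hs0 (le_of_lt hhs')
  have hB : B = ↑(((Finset.range N).filter (fun n => n % t < r)).image (fun n => g ^ n)) :=
    descr t r htN ht0 hrt
  -- count on range d
  have rangeCount : ∀ (d c : ℕ), c ≤ d →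
      ((Finset.range d).filter (fun k => k < c)).card = c := by
    intro d c hcd
    have : (Finset.range d).filter (fun k => k < c) = Finset.range c := by
      ext k
      simp only [Finset.mem_filter, Finset.mem_range]
      omega
    rw [this, Finset.card_range]
  refine ⟨?_, ?_, ?_⟩
  · rw [hA, cardim _ (memN _)]
    rw [countAux N s hsN hs0 (fun k => k < h), rangeCount s h (by omega)]
  · rw [hB, cardim _ (memN _)]
    rw [countAux N t htN ht0 (fun k => k < r), rangeCount t r hrt]
  · have hAB : A ∩ B
        = ↑(((Finset.range N).filter (fun n => n % s < h ∧ n % t < r)).image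
            (fun n => g ^ n)) := by
      ext x
      constructor
      · rintro ⟨hxA, hxB⟩
        rw [hA] at hxA
        rw [hB] at hxB
        simp only [Finset.coe_image, Set.mem_image, Finset.mem_coe,
          Finset.mem_filter, Finset.mem_range] at hxA hxB ⊢
        obtain ⟨n1, ⟨hn1, hn1s⟩, rfl⟩ := hxA
        obtain ⟨n2, ⟨hn2, hn2t⟩, he⟩ := hxB
        have : n2 = n1 := hinj n2 n1 hn2 hn1 he
        subst this
        exact ⟨n2, ⟨hn2, hn1s, hn2t⟩, rfl⟩
      · intro hx
        simp only [Finset.coe_image, Set.mem_image, Finset.mem_coe,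
          Finset.mem_filter, Finset.mem_range] at hx
        obtain ⟨n, ⟨hn, hns, hnt⟩, rfl⟩ := hx
        constructor
        · rw [hA]
          simp only [Finset.coe_image, Set.mem_image, Finset.mem_coe,
            Finset.mem_filter, Finset.mem_range]
          exact ⟨n, ⟨hn, hns⟩, rfl⟩
        · rw [hB]
          simp only [Finset.coe_image, Set.mem_image, Finset.mem_coe,
            Finset.mem_filter, Finset.mem_range]
          exact ⟨n, ⟨hn, hnt⟩, rfl⟩
    rw [hAB, cardim _ (memN _)]
    have hst0 : 0 < s * t := Nat.mul_pos hs0 ht0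
    have hfe : (Finset.range N).filter (fun n => n % s < h ∧ n % t < r)
        = (Finset.range N).filter
            (fun n => (fun k => k % s < h ∧ k % t < r) (n % (s * t))) := by
      apply Finset.filter_congr
      intro n _
      have e1 : n % (s * t) % s = n % s := Nat.mod_mod_of_dvd _ ⟨t, rfl⟩
      have e2 : n % (s * t) % t = n % t := Nat.mod_mod_of_dvd _ ⟨s, Nat.mul_comm s t⟩
      show _ ↔ (n % (s * t) % s < h ∧ n % (s * t) % t < r)
      rw [e1, e2]
    rw [hfe, countAux N (s * t) hstN hst0 (fun k => k % s < h ∧ k % t < r),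
      countCRT s t h r cop hs0 ht0 (by omega) hrt]
    ring
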